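/- Constant recurrence coefficients: for the parameter choice (a,b;c,d) = (4/3, 5/3; 2, 5/2), the recurrence coefficients are constant in n: β_n = 4/9, α_{n+1} = 16/243 and γ_{n+1} = 64/19683 for all n ∈ ℕ; consequently, with P_{−1} = P_{−2} = 0 and P_0 = 1, the polynomials P_n(x) := P_n(x; 4/3, 5/3; 2, 5/2) satisfy, for every n ∈ ℕ and all x, the constant-coefficient third-order recurrence P_{n+1}(x) = (x − 4/9) P_n(x) − (16/243) P_{n−1}(x) − (64/19683) P_{n−2}(x). -/

import Mathlib

/-- Pochhammer symbol `(z)_n = z (z+1) ⋯ (z+n-1)`. -/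
noncomputable def poch (z : ℝ) (n : ℕ) : ℝ := ∏ i ∈ Finset.range n, (z + i)

/-- The auxiliary parameters `c'_m` (for integers `m ≥ -1`): `c'_{2k-1} = c + k` and
`c'_{2k} = d + k`. -/
noncomputable def cp (c d : ℝ) (m : ℤ) : ℝ :=
  if m % 2 = 0 then d + (m / 2 : ℤ) else c + ((m + 1) / 2 : ℤ)

/-- The recurrence coefficient `β_n`. -/
noncomputable def betaC (a b c d : ℝ) (n : ℕ) : ℝ :=
  ((n : ℝ) + 1) * (a + n) * (b + n) /
      ((cp c d ((n : ℤ) - 1) + n) * (cp c d (n : ℤ) + n)) -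
    (n : ℝ) * (a + n - 1) * (b + n - 1) /
      ((cp c d ((n : ℤ) - 1) + n - 1) * (cp c d (n : ℤ) + n - 2))

/-- The recurrence coefficient `α_{n+1}`. -/
noncomputable def alphaC (a b c d : ℝ) (n : ℕ) : ℝ :=
  (((n : ℝ) + 1) * (a + n) * (b + n) /
      ((cp c d ((n : ℤ) - 1) + n) * (cp c d (n : ℤ) + n))) *
    ((n : ℝ) * (a + n - 1) * (b + n - 1) /
        (2 * (cp c d ((n : ℤ) - 1) + n - 1) * (cp c d (n : ℤ) + n - 1)) -
      ((n : ℝ) + 1) * (a + n) * (b + n) /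
        ((cp c d ((n : ℤ) - 1) + n) * (cp c d (n : ℤ) + n)) +
      ((n : ℝ) + 2) * (a + n + 1) * (b + n + 1) /
        (2 * (cp c d ((n : ℤ) - 1) + n + 1) * (cp c d (n : ℤ) + n + 1)))

/-- The recurrence coefficient `γ_{n+1}`. -/
noncomputable def gammaC (a b c d : ℝ) (n : ℕ) : ℝ :=
  (poch ((n : ℝ) + 1) 2 * poch (a + n) 2 * poch (b + n) 2 *
      (cp c d (n : ℤ) - 1) * (cp c d (n : ℤ) - a) * (cp c d (n : ℤ) - b)) /
    (poch (cp c d ((n : ℤ) - 1) + n) 3 * poch (cp c d (n : ℤ) + n) 3 *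
      poch (cp c d (n : ℤ) + n - 1) 3)

/-- The type II multiple orthogonal polynomial of degree `n` on the step line. -/
noncomputable def P (a b c d : ℝ) (n : ℕ) (x : ℝ) : ℝ :=
  ∑ j ∈ Finset.range (n + 1),
    (n.choose j : ℝ) * (-1 : ℝ) ^ j *
      (poch (a + n - j) j * poch (b + n - j) j) /
      (poch (c + (n / 2 : ℕ) + n - j) j * poch (d + ((n - 1) / 2 : ℕ) + n - j) j) *
      x ^ (n - j)

/-- The polynomials `P_m` extended to integer indices by the convention
`P_m = 0` for `m < 0`. -/
noncomputable def Pz (a b c d : ℝ) (m : ℤ) (x : ℝ) : ℝ :=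
  if 0 ≤ m then P a b c d m.toNat x else 0

/-! ### Auxiliary lemmas -/

lemma poch_two (z : ℝ) : poch z 2 = z*(z+1) := by
  simp [poch, Finset.prod_range_succ]

lemma poch_three (z : ℝ) : poch z 3 = z*(z+1)*(z+2) := by
  simp [poch, Finset.prod_range_succ]

lemma poch_succ (z : ℝ) (j : ℕ) : poch z (j+1) = z * poch (z+1) j := by
  unfold poch
  rw [Finset.prod_range_succ']
  have h : ∀ i ∈ Finset.range j, (z + ((i+1 : ℕ):ℝ)) = (z+1+(i:ℕ)) := by
    intro i _; push_cast; ring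
  rw [Finset.prod_congr rfl h]
  norm_num [mul_comm]

lemma poch_shift (z w : ℝ) (j : ℕ) (h : z + 1 = w) : poch z (j+1) = z * poch w j := by
  rw [poch_succ, h]

lemma poch_pos {z : ℝ} (hz : 0 < z) (j : ℕ) : 0 < poch z j := by
  unfold poch
  apply Finset.prod_pos
  intro i _
  have : (0:ℝ) ≤ (i:ℕ) := Nat.cast_nonneg i
  linarith

lemma cp_even (c d : ℝ) (k : ℕ) : cp c d ((k+k : ℕ) : ℤ) = d + (k:ℝ) := by
  unfold cp
  rw [if_pos (by omega), show ((k+k:ℕ):ℤ)/2 = (k:ℤ) by omega]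
  push_cast; ring

lemma cp_even_sub_one (c d : ℝ) (k : ℕ) : cp c d (((k+k : ℕ) : ℤ) - 1) = c + (k:ℝ) := by
  unfold cp
  rw [if_neg (by omega), show (((k+k:ℕ):ℤ)-1+1)/2 = (k:ℤ) by omega]
  push_cast; ring

lemma cp_odd (c d : ℝ) (k : ℕ) : cp c d ((2*k+1 : ℕ) : ℤ) = c + (k:ℝ) + 1 := by
  unfold cp
  rw [if_neg (by omega), show (((2*k+1:ℕ):ℤ)+1)/2 = (k:ℤ)+1 by omega]
  push_cast; ring

lemma cp_odd_sub_one (c d : ℝ) (k : ℕ) : cp c d (((2*k+1 : ℕ) : ℤ) - 1) = d + (k:ℝ) := by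
  unfold cp
  rw [if_pos (by omega), show (((2*k+1:ℕ):ℤ)-1)/2 = (k:ℤ) by omega]
  push_cast; ring

/-! ### The three coefficient evaluations -/

lemma beta_alg_even (K : ℝ) (hK : 0 ≤ K) :
    (2*K+1)*(4/3+2*K)*(5/3+2*K)/((2+3*K)*(5/2+3*K))
      - 2*K*(1/3+2*K)*(2/3+2*K)/((1+3*K)*(1/2+3*K)) = 4/9 := by
  rw [div_sub_div _ _ (by positivity) (by positivity),
    div_eq_div_iff (by positivity) (by norm_num)]
  ring

lemma beta_alg_odd (K : ℝ) (hK : 0 ≤ K) :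
    (2*K+2)*(7/3+2*K)*(8/3+2*K)/((7/2+3*K)*(4+3*K))
      - (2*K+1)*(4/3+2*K)*(5/3+2*K)/((5/2+3*K)*(2+3*K)) = 4/9 := by
  rw [div_sub_div _ _ (by positivity) (by positivity),
    div_eq_div_iff (by positivity) (by norm_num)]
  ring

lemma beta_eval (n : ℕ) : betaC (4/3) (5/3) 2 (5/2) n = 4/9 := by
  rcases Nat.even_or_odd n with ⟨k, rfl⟩ | ⟨k, rfl⟩
  · have e : betaC (4/3) (5/3) 2 (5/2) (k+k)
        = (2*(k:ℝ)+1)*(4/3+2*(k:ℝ))*(5/3+2*(k:ℝ))/((2+3*(k:ℝ))*(5/2+3*(k:ℝ)))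
          - 2*(k:ℝ)*(1/3+2*(k:ℝ))*(2/3+2*(k:ℝ))/((1+3*(k:ℝ))*(1/2+3*(k:ℝ))) := by
      unfold betaC
      rw [cp_even_sub_one, cp_even]
      push_cast
      ring
    rw [e]
    exact beta_alg_even _ (Nat.cast_nonneg k)
  · have e : betaC (4/3) (5/3) 2 (5/2) (2*k+1)
        = (2*(k:ℝ)+2)*(7/3+2*(k:ℝ))*(8/3+2*(k:ℝ))/((7/2+3*(k:ℝ))*(4+3*(k:ℝ)))
          - (2*(k:ℝ)+1)*(4/3+2*(k:ℝ))*(5/3+2*(k:ℝ))/((5/2+3*(k:ℝ))*(2+3*(k:ℝ))) := by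
      unfold betaC
      rw [cp_odd_sub_one, cp_odd]
      push_cast
      ring
    rw [e]
    exact beta_alg_odd _ (Nat.cast_nonneg k)

lemma alpha_alg_even (K : ℝ) (hK : 0 ≤ K) :
    ((2*K+1)*(4/3+2*K)*(5/3+2*K)/((2+3*K)*(5/2+3*K))) *
      (2*K*(1/3+2*K)*(2/3+2*K)/(2*(1+3*K)*(3/2+3*K))
        - (2*K+1)*(4/3+2*K)*(5/3+2*K)/((2+3*K)*(5/2+3*K))
        + (2*K+2)*(7/3+2*K)*(8/3+2*K)/(2*(3+3*K)*(7/2+3*K))) = 16/243 := by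
  rw [div_sub_div _ _ (by positivity) (by positivity),
    div_add_div _ _ (by positivity) (by positivity),
    div_mul_div_comm,
    div_eq_div_iff (by positivity) (by norm_num)]
  ring

lemma alpha_alg_odd (K : ℝ) (hK : 0 ≤ K) :
    ((2*K+2)*(7/3+2*K)*(8/3+2*K)/((7/2+3*K)*(4+3*K))) *
      ((2*K+1)*(4/3+2*K)*(5/3+2*K)/(2*(5/2+3*K)*(3+3*K))
        - (2*K+2)*(7/3+2*K)*(8/3+2*K)/((7/2+3*K)*(4+3*K))
        + (2*K+3)*(10/3+2*K)*(11/3+2*K)/(2*(9/2+3*K)*(5+3*K))) = 16/243 := by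
  rw [div_sub_div _ _ (by positivity) (by positivity),
    div_add_div _ _ (by positivity) (by positivity),
    div_mul_div_comm,
    div_eq_div_iff (by positivity) (by norm_num)]
  ring

lemma alpha_eval (n : ℕ) : alphaC (4/3) (5/3) 2 (5/2) n = 16/243 := by
  rcases Nat.even_or_odd n with ⟨k, rfl⟩ | ⟨k, rfl⟩
  · have e : alphaC (4/3) (5/3) 2 (5/2) (k+k)
        = ((2*(k:ℝ)+1)*(4/3+2*(k:ℝ))*(5/3+2*(k:ℝ))/((2+3*(k:ℝ))*(5/2+3*(k:ℝ)))) *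
          (2*(k:ℝ)*(1/3+2*(k:ℝ))*(2/3+2*(k:ℝ))/(2*(1+3*(k:ℝ))*(3/2+3*(k:ℝ)))
            - (2*(k:ℝ)+1)*(4/3+2*(k:ℝ))*(5/3+2*(k:ℝ))/((2+3*(k:ℝ))*(5/2+3*(k:ℝ)))
            + (2*(k:ℝ)+2)*(7/3+2*(k:ℝ))*(8/3+2*(k:ℝ))/(2*(3+3*(k:ℝ))*(7/2+3*(k:ℝ)))) := by
      unfold alphaC
      rw [cp_even_sub_one, cp_even]
      push_cast
      ring
    rw [e]
    exact alpha_alg_even _ (Nat.cast_nonneg k)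
  · have e : alphaC (4/3) (5/3) 2 (5/2) (2*k+1)
        = ((2*(k:ℝ)+2)*(7/3+2*(k:ℝ))*(8/3+2*(k:ℝ))/((7/2+3*(k:ℝ))*(4+3*(k:ℝ)))) *
          ((2*(k:ℝ)+1)*(4/3+2*(k:ℝ))*(5/3+2*(k:ℝ))/(2*(5/2+3*(k:ℝ))*(3+3*(k:ℝ)))
            - (2*(k:ℝ)+2)*(7/3+2*(k:ℝ))*(8/3+2*(k:ℝ))/((7/2+3*(k:ℝ))*(4+3*(k:ℝ)))
            + (2*(k:ℝ)+3)*(10/3+2*(k:ℝ))*(11/3+2*(k:ℝ))/(2*(9/2+3*(k:ℝ))*(5+3*(k:ℝ)))) := by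
      unfold alphaC
      rw [cp_odd_sub_one, cp_odd]
      push_cast
      ring
    rw [e]
    exact alpha_alg_odd _ (Nat.cast_nonneg k)

lemma gamma_alg_even (K : ℝ) (hK : 0 ≤ K) :
    ((2*K+1)*(2*K+2)*((4/3+2*K)*(7/3+2*K))*((5/3+2*K)*(8/3+2*K))*(3/2+K)*(7/6+K)*(5/6+K)) /
      ((2+3*K)*(3+3*K)*(4+3*K)*((5/2+3*K)*(7/2+3*K)*(9/2+3*K))*((3/2+3*K)*(5/2+3*K)*(7/2+3*K)))
      = 64/19683 := by
  rw [div_eq_div_iff (by positivity) (by norm_num)]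
  ring

lemma gamma_alg_odd (K : ℝ) (hK : 0 ≤ K) :
    ((2*K+2)*(2*K+3)*((7/3+2*K)*(10/3+2*K))*((8/3+2*K)*(11/3+2*K))*(2+K)*(5/3+K)*(4/3+K)) /
      ((7/2+3*K)*(9/2+3*K)*(11/2+3*K)*((4+3*K)*(5+3*K)*(6+3*K))*((3+3*K)*(4+3*K)*(5+3*K)))
      = 64/19683 := by
  rw [div_eq_div_iff (by positivity) (by norm_num)]
  ring

lemma gamma_eval (n : ℕ) : gammaC (4/3) (5/3) 2 (5/2) n = 64/19683 := by
  rcases Nat.even_or_odd n with ⟨k, rfl⟩ | ⟨k, rfl⟩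
  · have e : gammaC (4/3) (5/3) 2 (5/2) (k+k)
        = ((2*(k:ℝ)+1)*(2*(k:ℝ)+2)*((4/3+2*(k:ℝ))*(7/3+2*(k:ℝ)))*((5/3+2*(k:ℝ))*(8/3+2*(k:ℝ)))*(3/2+(k:ℝ))*(7/6+(k:ℝ))*(5/6+(k:ℝ))) /
          ((2+3*(k:ℝ))*(3+3*(k:ℝ))*(4+3*(k:ℝ))*((5/2+3*(k:ℝ))*(7/2+3*(k:ℝ))*(9/2+3*(k:ℝ)))*((3/2+3*(k:ℝ))*(5/2+3*(k:ℝ))*(7/2+3*(k:ℝ)))) := by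
      unfold gammaC
      rw [cp_even_sub_one, cp_even]
      rw [poch_two, poch_two, poch_two, poch_three, poch_three, poch_three]
      push_cast
      ring
    rw [e]
    exact gamma_alg_even _ (Nat.cast_nonneg k)
  · have e : gammaC (4/3) (5/3) 2 (5/2) (2*k+1)
        = ((2*(k:ℝ)+2)*(2*(k:ℝ)+3)*((7/3+2*(k:ℝ))*(10/3+2*(k:ℝ)))*((8/3+2*(k:ℝ))*(11/3+2*(k:ℝ)))*(2+(k:ℝ))*(5/3+(k:ℝ))*(4/3+(k:ℝ))) /
          ((7/2+3*(k:ℝ))*(9/2+3*(k:ℝ))*(11/2+3*(k:ℝ))*((4+3*(k:ℝ))*(5+3*(k:ℝ))*(6+3*(k:ℝ)))*((3+3*(k:ℝ))*(4+3*(k:ℝ))*(5+3*(k:ℝ)))) := by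
      unfold gammaC
      rw [cp_odd_sub_one, cp_odd]
      rw [poch_two, poch_two, poch_two, poch_three, poch_three, poch_three]
      push_cast
      ring
    rw [e]
    exact gamma_alg_odd _ (Nat.cast_nonneg k)

/-! ### Closed form of the coefficients of `P` -/

lemma scalar_id (m j : ℕ) :
    3*(((j+1+m).choose (j+1) : ℕ):ℝ)*(3*(m:ℝ)+4)*(3*(m:ℝ)+5)*((j+3*m+5).choose j : ℝ)
      = ((j+3*m+3).choose (j+1):ℝ)*((j:ℝ)+3*(m:ℝ)+4)*((j:ℝ)+3*(m:ℝ)+5)*((j+1+m).choose j:ℝ) := by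
  rw [Nat.cast_choose ℝ (show j+1 ≤ j+1+m by omega),
      Nat.cast_choose ℝ (show j ≤ j+3*m+5 by omega),
      Nat.cast_choose ℝ (show j+1 ≤ j+3*m+3 by omega),
      Nat.cast_choose ℝ (show j ≤ j+1+m by omega),
      show (j+1+m)-(j+1) = m by omega,
      show (j+3*m+5)-j = 3*m+5 by omega,
      show (j+3*m+3)-(j+1) = 3*m+2 by omega,
      show (j+1+m)-j = m+1 by omega]
  have F1 : ((Nat.factorial (3*m+5)):ℝ) = (3*(m:ℝ)+5)*(3*(m:ℝ)+4)*(3*(m:ℝ)+3)*((Nat.factorial (3*m+2)):ℝ) := by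
    rw [show 3*m+5 = (3*m+4)+1 by omega, Nat.factorial_succ,
        show 3*m+4 = (3*m+3)+1 by omega, Nat.factorial_succ,
        show 3*m+3 = (3*m+2)+1 by omega, Nat.factorial_succ]
    push_cast; ring
  have F2 : ((Nat.factorial (j+3*m+5)):ℝ) = ((j:ℝ)+3*m+5)*((j:ℝ)+3*m+4)*((Nat.factorial (j+3*m+3)):ℝ) := by
    rw [show j+3*m+5 = (j+3*m+4)+1 by omega, Nat.factorial_succ,
        show j+3*m+4 = (j+3*m+3)+1 by omega, Nat.factorial_succ]
    push_cast; ring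
  have F3 : ((Nat.factorial (m+1)):ℝ) = ((m:ℝ)+1)*((Nat.factorial m):ℝ) := by
    rw [Nat.factorial_succ]; push_cast; ring
  have F4 : ((Nat.factorial (j+1)):ℝ) = ((j:ℝ)+1)*((Nat.factorial j):ℝ) := by
    rw [Nat.factorial_succ]; push_cast; ring
  rw [F1, F2, F3, F4]
  have n1 : ((Nat.factorial j):ℝ) ≠ 0 := Nat.cast_ne_zero.2 (Nat.factorial_ne_zero _)
  have n2 : ((Nat.factorial m):ℝ) ≠ 0 := Nat.cast_ne_zero.2 (Nat.factorial_ne_zero _)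
  have n3 : ((Nat.factorial (3*m+2)):ℝ) ≠ 0 := Nat.cast_ne_zero.2 (Nat.factorial_ne_zero _)
  have n4 : ((j:ℝ)+1) ≠ 0 := by positivity
  have n5 : ((m:ℝ)+1) ≠ 0 := by positivity
  have n6 : (3*(m:ℝ)+3) ≠ 0 := by positivity
  field_simp

lemma prodDen (n : ℕ) (hn : 1 ≤ n) (X : ℝ) :
    (2 + ((n/2 : ℕ):ℝ) + X) * (5/2 + (((n-1)/2 : ℕ):ℝ) + X)
      = (((n:ℝ)+3+2*X)*((n:ℝ)+4+2*X))/4 := by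
  rcases Nat.even_or_odd n with ⟨k, rfl⟩ | ⟨k, rfl⟩
  · have h1 : (k+k)/2 = k := by omega
    have h2 : (k+k-1)/2 = k-1 := by omega
    have hk : 1 ≤ k := by omega
    rw [h1, h2, Nat.cast_sub hk]
    push_cast
    ring
  · have h1 : (2*k+1)/2 = k := by omega
    have h2 : (2*k+1-1)/2 = k := by omega
    rw [h1, h2]
    push_cast
    ring

lemma coef_eq (n : ℕ) : ∀ j, j ≤ n →
    (n.choose j : ℝ) * (poch (4/3 + (n:ℝ) - (j:ℕ)) j * poch (5/3 + (n:ℝ) - (j:ℕ)) j)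
      = (4/27:ℝ)^j * ((3*n-2*j+2).choose j : ℝ)
        * (poch (2 + ((n/2 : ℕ):ℝ) + (n:ℝ) - (j:ℕ)) j
            * poch (5/2 + (((n-1)/2 : ℕ):ℝ) + (n:ℝ) - (j:ℕ)) j) := by
  intro j
  induction j with
  | zero => intro _; simp [poch]
  | succ j ih =>
    intro hj1
    have hj : j ≤ n := by omega
    have ihe := ih hj
    obtain ⟨m, hm⟩ : ∃ m, n = j+1+m := ⟨n-(j+1), by omega⟩
    subst hm
    rw [poch_shift _ (4/3 + ((j+1+m:ℕ):ℝ) - ((j:ℕ):ℝ)) j (by push_cast; ring),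
        poch_shift _ (5/3 + ((j+1+m:ℕ):ℝ) - ((j:ℕ):ℝ)) j (by push_cast; ring),
        poch_shift _ (2 + (((j+1+m)/2 : ℕ):ℝ) + ((j+1+m:ℕ):ℝ) - ((j:ℕ):ℝ)) j (by push_cast; ring),
        poch_shift _ (5/2 + ((((j+1+m)-1)/2 : ℕ):ℝ) + ((j+1+m:ℕ):ℝ) - ((j:ℕ):ℝ)) j (by push_cast; ring),
        show 3*(j+1+m)-2*(j+1)+2 = j+3*m+3 by omega]
    rw [show 3*(j+1+m)-2*j+2 = j+3*m+5 by omega] at ihe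
    have SI := scalar_id m j
    have hz34 := prodDen (j+1+m) (by omega) (((j+1+m:ℕ):ℝ) - ((j+1:ℕ):ℝ))
    have hC : (((j+1+m).choose j : ℕ):ℝ) ≠ 0 :=
      Nat.cast_ne_zero.2 (Nat.choose_pos (by omega)).ne'
    apply mul_right_cancel₀ hC
    linear_combination (norm := (push_cast; ring1))
      ((((j+1+m).choose (j+1) : ℕ):ℝ) * (4/3 + ((j+1+m:ℕ):ℝ) - ((j+1:ℕ):ℝ))
        * (5/3 + ((j+1+m:ℕ):ℝ) - ((j+1:ℕ):ℝ))) * ihe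
      + (-(4/27) * (4/27:ℝ)^j * (((j+3*m+3).choose (j+1) : ℕ):ℝ)
          * poch (2 + (((j+1+m)/2 : ℕ):ℝ) + ((j+1+m:ℕ):ℝ) - ((j:ℕ):ℝ)) j
          * poch (5/2 + ((((j+1+m)-1)/2 : ℕ):ℝ) + ((j+1+m:ℕ):ℝ) - ((j:ℕ):ℝ)) j
          * (((j+1+m).choose j : ℕ):ℝ)) * hz34
      + ((4/27:ℝ)^j
          * poch (2 + (((j+1+m)/2 : ℕ):ℝ) + ((j+1+m:ℕ):ℝ) - ((j:ℕ):ℝ)) j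
          * poch (5/2 + ((((j+1+m)-1)/2 : ℕ):ℝ) + ((j+1+m:ℕ):ℝ) - ((j:ℕ):ℝ)) j / 27) * SI

/-! ### The polynomials `Q` with explicit binomial coefficients -/

noncomputable def cf (n i : ℕ) : ℝ := (-4/27 : ℝ)^(n-i) * ((n+2*i+2).choose (n-i) : ℝ)

noncomputable def Q (n : ℕ) (x : ℝ) : ℝ := ∑ i ∈ Finset.range (n+1), cf n i * x^i

lemma choose_idR (N j : ℕ) :
    (((N+3).choose (j+3) : ℕ) : ℝ)
      = (N.choose (j+3) : ℝ) + 3*((N+2).choose (j+2) : ℝ)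
        - 3*((N+1).choose (j+1) : ℝ) + (N.choose j : ℝ) := by
  have h1 : (N+3).choose (j+3) = (N+2).choose (j+2) + (N+2).choose (j+3) := by
    rw [show N+3 = (N+2)+1 by omega, show j+3 = (j+2)+1 by omega]
    exact Nat.choose_succ_succ _ _
  have h2 : (N+2).choose (j+3) = (N+1).choose (j+2) + (N+1).choose (j+3) := by
    rw [show N+2 = (N+1)+1 by omega, show j+3 = (j+2)+1 by omega]
    exact Nat.choose_succ_succ _ _
  have h3 : (N+1).choose (j+3) = N.choose (j+2) + N.choose (j+3) := by
    rw [show j+3 = (j+2)+1 by omega]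
    exact Nat.choose_succ_succ _ _
  have h4 : (N+2).choose (j+2) = (N+1).choose (j+1) + (N+1).choose (j+2) := by
    rw [show N+2 = (N+1)+1 by omega, show j+2 = (j+1)+1 by omega]
    exact Nat.choose_succ_succ _ _
  have h5 : (N+1).choose (j+2) = N.choose (j+1) + N.choose (j+2) := by
    rw [show j+2 = (j+1)+1 by omega]
    exact Nat.choose_succ_succ _ _
  have h6 : (N+1).choose (j+1) = N.choose j + N.choose (j+1) := Nat.choose_succ_succ _ _
  have key : (N+3).choose (j+3) + 3*((N+1).choose (j+1))
      = N.choose (j+3) + 3*((N+2).choose (j+2)) + N.choose j := by omega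
  have keyR : ((N+3).choose (j+3) : ℝ) + 3*((N+1).choose (j+1) : ℝ)
      = (N.choose (j+3) : ℝ) + 3*((N+2).choose (j+2) : ℝ) + (N.choose j : ℝ) := by
    exact_mod_cast key
  linarith

lemma gen_id (N J : ℕ) :
    (-4/27:ℝ)^(J+3) * ((N+3).choose (J+3):ℝ)
      = (-4/27:ℝ)^(J+3) * (N.choose (J+3):ℝ)
        - 4/9*((-4/27:ℝ)^(J+2) * ((N+2).choose (J+2):ℝ))
        - 16/243*((-4/27:ℝ)^(J+1) * ((N+1).choose (J+1):ℝ))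
        - 64/19683*((-4/27:ℝ)^J * (N.choose J : ℝ)) := by
  have h := choose_idR N J
  linear_combination ((-4/27:ℝ)^J * (-(64/19683))) * h

lemma e1gen (m i : ℕ) (hi : i < m) :
    cf (m+3) (i+1) = cf (m+2) i - 4/9 * cf (m+2) (i+1)
      - 16/243 * cf (m+1) (i+1) - 64/19683 * cf m (i+1) := by
  unfold cf
  rw [show m+3-(i+1) = (m-1-i)+3 by omega,
      show m+3+2*(i+1)+2 = (m+2*i+4)+3 by omega,
      show m+2-i = (m-1-i)+3 by omega,
      show m+2+2*i+2 = m+2*i+4 by omega,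
      show m+2-(i+1) = (m-1-i)+2 by omega,
      show m+2+2*(i+1)+2 = (m+2*i+4)+2 by omega,
      show m+1-(i+1) = (m-1-i)+1 by omega,
      show m+1+2*(i+1)+2 = (m+2*i+4)+1 by omega,
      show m-(i+1) = m-1-i by omega,
      show m+2*(i+1)+2 = m+2*i+4 by omega]
  exact gen_id (m+2*i+4) (m-1-i)

lemma e0lem (m : ℕ) :
    cf (m+3) 0 = -(4/9) * cf (m+2) 0 - 16/243 * cf (m+1) 0 - 64/19683 * cf m 0 := by
  unfold cf
  rw [show m+3-0 = m+3 by omega, show m+3+2*0+2 = (m+2)+3 by omega,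
      show m+2-0 = m+2 by omega, show m+2+2*0+2 = (m+2)+2 by omega,
      show m+1-0 = m+1 by omega, show m+1+2*0+2 = (m+2)+1 by omega,
      show m-0 = m by omega, show m+2*0+2 = m+2 by omega]
  have h := gen_id (m+2) m
  rw [Nat.choose_eq_zero_of_lt (by omega : m+2 < m+3)] at h
  rw [show m+3 = m+2+1 by omega] at h ⊢
  linear_combination h

lemma e2lem (m : ℕ) :
    cf (m+3) (m+1) = cf (m+2) m - 4/9 * cf (m+2) (m+1) - 16/243 * cf (m+1) (m+1) := by
  unfold cf
  rw [show m+3-(m+1) = 2 by omega, show m+3+2*(m+1)+2 = 3*m+7 by omega,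
      show m+2-m = 2 by omega, show m+2+2*m+2 = 3*m+4 by omega,
      show m+2-(m+1) = 1 by omega, show m+2+2*(m+1)+2 = 3*m+6 by omega,
      show m+1-(m+1) = 0 by omega, show m+1+2*(m+1)+2 = 3*m+5 by omega]
  rw [Nat.cast_choose_two, Nat.cast_choose_two, Nat.choose_one_right, Nat.choose_zero_right]
  push_cast
  ring

lemma e3lem (m : ℕ) :
    cf (m+3) (m+2) = cf (m+2) (m+1) - 4/9 * cf (m+2) (m+2) := by
  unfold cf
  rw [show m+3-(m+2) = 1 by omega, show m+3+2*(m+2)+2 = 3*m+9 by omega,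
      show m+2-(m+1) = 1 by omega, show m+2+2*(m+1)+2 = 3*m+6 by omega,
      show m+2-(m+2) = 0 by omega]
  rw [Nat.choose_one_right, Nat.choose_one_right, Nat.choose_zero_right]
  push_cast
  ring

lemma e4lem (m : ℕ) : cf (m+3) (m+3) = cf (m+2) (m+2) := by
  unfold cf
  rw [show m+3-(m+3) = 0 by omega, show m+2-(m+2) = 0 by omega]
  simp

lemma Qrec2 (m : ℕ) (x : ℝ) :
    Q (m+3) x = (x - 4/9) * Q (m+2) x - (16/243) * Q (m+1) x - (64/19683) * Q m x := by
  unfold Q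
  have hshift : (x - 4/9) * (∑ i ∈ Finset.range (m+2+1), cf (m+2) i * x^i)
      = (∑ i ∈ Finset.range (m+2+1), cf (m+2) i * x^(i+1))
        - 4/9 * (∑ i ∈ Finset.range (m+2+1), cf (m+2) i * x^i) := by
    rw [sub_mul, Finset.mul_sum]
    congr 1
    exact Finset.sum_congr rfl fun i _ => by ring
  rw [hshift]
  rw [Finset.sum_range_succ' (fun i => cf (m+3) i * x^i) (m+3),
      Finset.sum_range_succ' (fun i => cf (m+2) i * x^i) (m+2),
      Finset.sum_range_succ' (fun i => cf (m+1) i * x^i) (m+1),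
      Finset.sum_range_succ' (fun i => cf m i * x^i) m]
  rw [Finset.sum_range_succ (fun i => cf (m+3) (i+1) * x^(i+1)) (m+2),
      Finset.sum_range_succ (fun i => cf (m+3) (i+1) * x^(i+1)) (m+1),
      Finset.sum_range_succ (fun i => cf (m+3) (i+1) * x^(i+1)) m,
      Finset.sum_range_succ (fun i => cf (m+2) i * x^(i+1)) (m+2),
      Finset.sum_range_succ (fun i => cf (m+2) i * x^(i+1)) (m+1),
      Finset.sum_range_succ (fun i => cf (m+2) i * x^(i+1)) m,
      Finset.sum_range_succ (fun i => cf (m+2) (i+1) * x^(i+1)) (m+1),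
      Finset.sum_range_succ (fun i => cf (m+2) (i+1) * x^(i+1)) m,
      Finset.sum_range_succ (fun i => cf (m+1) (i+1) * x^(i+1)) m]
  have hL : (∑ i ∈ Finset.range m, cf (m+3) (i+1) * x^(i+1))
      = (∑ i ∈ Finset.range m, cf (m+2) i * x^(i+1))
        - 4/9 * (∑ i ∈ Finset.range m, cf (m+2) (i+1) * x^(i+1))
        - 16/243 * (∑ i ∈ Finset.range m, cf (m+1) (i+1) * x^(i+1))
        - 64/19683 * (∑ i ∈ Finset.range m, cf m (i+1) * x^(i+1)) := by
    rw [Finset.mul_sum, Finset.mul_sum, Finset.mul_sum, ← Finset.sum_sub_distrib,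
        ← Finset.sum_sub_distrib, ← Finset.sum_sub_distrib]
    apply Finset.sum_congr rfl
    intro i hi
    have h := e1gen m i (Finset.mem_range.1 hi)
    linear_combination x^(i+1) * h
  rw [hL]
  have h0 := e0lem m
  have h2 := e2lem m
  have h3 := e3lem m
  have h4 := e4lem m
  linear_combination h0 + x^(m+1) * h2 + x^(m+2) * h3 + x^(m+3) * h4

lemma Qrec0 (x : ℝ) : Q 1 x = (x - 4/9) * Q 0 x := by
  have c1 : (3:ℕ).choose 1 = 3 := by decide
  simp [Q, cf, Finset.sum_range_succ, c1]
  norm_num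
  ring

lemma Qrec1 (x : ℝ) : Q 2 x = (x - 4/9) * Q 1 x - (16/243) * Q 0 x := by
  have c1 : (4:ℕ).choose 2 = 6 := by decide
  have c2 : (6:ℕ).choose 1 = 6 := by decide
  have c3 : (3:ℕ).choose 1 = 3 := by decide
  simp [Q, cf, Finset.sum_range_succ, c1, c2, c3]
  norm_num
  ring

/-! ### `P = Q` and the recurrence -/

lemma PeqQ (n : ℕ) (x : ℝ) : P (4/3) (5/3) 2 (5/2) n x = Q n x := by
  unfold P Q
  conv_rhs => rw [← Finset.sum_range_reflect]
  apply Finset.sum_congr rfl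
  intro j hj
  have hj' : j ≤ n := by
    have := Finset.mem_range.1 hj; omega
  rw [show n+1-1-j = n-j by omega]
  unfold cf
  rw [show n-(n-j) = j by omega, show n+2*(n-j)+2 = 3*n-2*j+2 by omega]
  have key := coef_eq n j hj'
  have hsg : ((-1:ℝ))^j * (4/27:ℝ)^j = (-4/27:ℝ)^j := by rw [← mul_pow]; norm_num
  have hle : ((j:ℕ):ℝ) ≤ ((n:ℕ):ℝ) := Nat.cast_le.2 hj'
  have h01 : (0:ℝ) ≤ ((n/2 : ℕ):ℝ) := Nat.cast_nonneg _
  have h02 : (0:ℝ) ≤ (((n-1)/2 : ℕ):ℝ) := Nat.cast_nonneg _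
  have hD1 : (0:ℝ) < poch (2 + ((n/2 : ℕ):ℝ) + (n:ℝ) - (j:ℕ)) j :=
    poch_pos (by linarith) j
  have hD2 : (0:ℝ) < poch (5/2 + (((n-1)/2 : ℕ):ℝ) + (n:ℝ) - (j:ℕ)) j :=
    poch_pos (by linarith) j
  rw [div_mul_eq_mul_div, div_eq_iff (mul_pos hD1 hD2).ne']
  linear_combination ((-1:ℝ)^j * x^(n-j)) * key
    + (((3*n-2*j+2).choose j : ℝ)
        * (poch (2 + ((n/2 : ℕ):ℝ) + (n:ℝ) - (j:ℕ)) j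
            * poch (5/2 + (((n-1)/2 : ℕ):ℝ) + (n:ℝ) - (j:ℕ)) j) * x^(n-j)) * hsg

lemma PzNat (k : ℕ) (x : ℝ) : Pz (4/3) (5/3) 2 (5/2) ((k:ℕ):ℤ) x = P (4/3) (5/3) 2 (5/2) k x := by
  unfold Pz
  rw [if_pos (Int.natCast_nonneg k)]
  simp

/-- Constant recurrence coefficients for `(a,b;c,d) = (4/3, 5/3; 2, 5/2)`:
`β_n = 4/9`, `α_{n+1} = 16/243`, `γ_{n+1} = 64/19683` for all `n`, and consequently
(with `P_{−1} = P_{−2} = 0`, `P_0 = 1`) the polynomials satisfy the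
constant-coefficient third-order recurrence. -/
theorem constant_recurrence_coefficients :
    (∀ n : ℕ, betaC (4 / 3) (5 / 3) 2 (5 / 2) n = 4 / 9) ∧
    (∀ n : ℕ, alphaC (4 / 3) (5 / 3) 2 (5 / 2) n = 16 / 243) ∧
    (∀ n : ℕ, gammaC (4 / 3) (5 / 3) 2 (5 / 2) n = 64 / 19683) ∧
    (∀ (n : ℕ) (x : ℝ),
      P (4 / 3) (5 / 3) 2 (5 / 2) (n + 1) x =
        (x - 4 / 9) * P (4 / 3) (5 / 3) 2 (5 / 2) n x -
          (16 / 243) * Pz (4 / 3) (5 / 3) 2 (5 / 2) ((n : ℤ) - 1) x -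
          (64 / 19683) * Pz (4 / 3) (5 / 3) 2 (5 / 2) ((n : ℤ) - 2) x) := by
  refine ⟨beta_eval, alpha_eval, gamma_eval, ?_⟩
  intro n x
  match n with
  | 0 =>
    have hz1 : Pz (4/3) (5/3) 2 (5/2) (((0:ℕ):ℤ) - 1) x = 0 := by
      unfold Pz; rw [if_neg (by norm_num)]
    have hz2 : Pz (4/3) (5/3) 2 (5/2) (((0:ℕ):ℤ) - 2) x = 0 := by
      unfold Pz; rw [if_neg (by norm_num)]
    rw [hz1, hz2, PeqQ, PeqQ]
    rw [Qrec0]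
    ring
  | 1 =>
    have hz1 : ((1:ℕ):ℤ) - 1 = ((0:ℕ):ℤ) := by norm_num
    have hz2 : Pz (4/3) (5/3) 2 (5/2) (((1:ℕ):ℤ) - 2) x = 0 := by
      unfold Pz; rw [if_neg (by norm_num)]
    rw [hz1, hz2, PzNat, PeqQ, PeqQ, PeqQ]
    rw [Qrec1]
    ring
  | (m+2) =>
    have hz1 : ((m+2:ℕ):ℤ) - 1 = ((m+1:ℕ):ℤ) := by push_cast; ring
    have hz2 : ((m+2:ℕ):ℤ) - 2 = ((m:ℕ):ℤ) := by push_cast; ring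
    rw [hz1, hz2, PzNat, PzNat, PeqQ, PeqQ, PeqQ, PeqQ]
    exact Qrec2 m x
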